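/- Assume ν ≤ 1. Let i ∈ {1,…,d} and β, γ ∈ M(coord) with (∂_i)^{sc}_β^γ ≠ 0. Then: if γ ∈ N_min then β ∈ N_min; if γ ∈ P then β ∈ P; and if γ ∈ N then β ∈ N. -/
import Mathlib


open scoped Classical

noncomputable section

/-- The set of `d`-tuples of natural numbers, `ℕ^d`. -/
abbrev Nd (d : ℕ) : Type := Fin d → ℕ

/-- Multi-indices over `ℕ^d`: finitely supported functions `ℕ^d → ℕ`. -/
abbrev MNd (d : ℕ) : Type := Nd d →₀ ℕ

/-- The coordinate set `coord = (𝔏 × M(ℕ^d)) ⊔ ℕ^d`, where `𝔏 = 𝔏⁻ ∪ {0}` is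
modelled as `Option Lm` (with `none` playing the role of the element `0`). -/
abbrev Coord (Lm : Type) (d : ℕ) : Type := (Option Lm × MNd d) ⊕ Nd d

/-- Multi-indices over `coord`. -/
abbrev MCoord (Lm : Type) (d : ℕ) : Type := Coord Lm d →₀ ℕ

variable {Lm : Type} {d : ℕ}

/-- Length `ℓ(m)` of a multi-index. -/
def mlen {I : Type} (m : I →₀ ℕ) : ℕ := m.sum fun _ v => v

/-- The `i`-th unit vector of `ℕ^d`. -/
def unitNd (i : Fin d) : Nd d := Pi.single i 1

/-- The coefficient `(z^{γ'} D^{(n')})_β^γ`. -/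
def coefZD (γ' : MCoord Lm d) (n' : Nd d) (β γ : MCoord Lm d) : ℝ :=
  (γ.sum fun x v =>
    match x with
    | Sum.inl (l, k) =>
        (v : ℝ) * ((k n' : ℝ) + 1) *
          (if β + Finsupp.single (Sum.inl (l, k)) 1 =
              γ + Finsupp.single (Sum.inl (l, k + Finsupp.single n' 1)) 1 + γ'
           then 1 else 0)
    | Sum.inr _ => 0) +
  ((γ (Sum.inr n') : ℝ) *
    (if β + Finsupp.single (Sum.inr n') 1 = γ + γ' then 1 else 0))

/-- The coefficient `(D^{(n')})_β^γ`. -/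
def coefD (n' : Nd d) (β γ : MCoord Lm d) : ℝ := coefZD 0 n' β γ

/-- The coefficient `(∂_i)_β^γ`. -/
def coefPartial (i : Fin d) (β γ : MCoord Lm d) : ℝ :=
  ∑ᶠ n : Nd d,
    ((n i : ℝ) + 1) * coefZD (Finsupp.single (Sum.inr (n + unitNd i)) 1) n β γ

/-- `[β]`. -/
def brkt (β : MCoord Lm d) : ℤ :=
  β.sum fun x v =>
    match x with
    | Sum.inl (_, k) => (1 - (mlen k : ℤ)) * (v : ℤ)
    | Sum.inr _ => (v : ℤ)

/-- Noise homogeneity `⟦β⟧`. -/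
def nh (β : MCoord Lm d) : ℕ :=
  β.sum fun x v =>
    match x with
    | Sum.inl (some _, _) => v
    | Sum.inl (none, _) => 0
    | Sum.inr _ => 0

/-- Scaled degree `|n|` of `n ∈ ℕ^d`. -/
def snorm (s : Fin d → ℝ) (n : Nd d) : ℝ := ∑ i, s i * (n i : ℝ)

/-- A subcritical pair `(l,k)`. -/
def Subcritical {L : Type} (s : Fin d → ℝ) (η : ℝ) (reg : L → ℝ) (ν : ℝ)
    (l : L) (k : MNd d) : Prop :=
  ν < η + reg l ∧
  ∀ k' : MNd d, 0 < k' → k' ≤ k →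
    ν < η + (k'.sum fun n v => (ν - snorm s n) * (v : ℝ)) ∧
    ν < η + reg l + (k'.sum fun n v => (ν - snorm s n) * (v : ℝ))

/-- A subcritical multi-index. -/
def SubcriticalM (s : Fin d → ℝ) (η : ℝ) (reg : Option Lm → ℝ) (ν : ℝ)
    (β : MCoord Lm d) : Prop :=
  ∀ (l : Option Lm) (k : MNd d), β (Sum.inl (l, k)) ≠ 0 → Subcritical s η reg ν l k

/-- Homogeneity `|β|`. -/
def homg (s : Fin d → ℝ) (η : ℝ) (α : Option Lm → ℝ) (β : MCoord Lm d) : ℝ :=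
  β.sum fun x v =>
    match x with
    | Sum.inl (l, k) =>
        (α l + k.sum fun n v' => (η - snorm s n) * (v' : ℝ)) * (v : ℝ)
    | Sum.inr n => (snorm s n - η) * (v : ℝ)

/-- The set `N_min`. -/
def Nmin (s : Fin d → ℝ) (η : ℝ) (reg : Option Lm → ℝ) (ν : ℝ) :
    Set (MCoord Lm d) :=
  {β | brkt β = 1 ∧ SubcriticalM s η reg ν β ∧
       ∀ n : Nd d, snorm s n < ν → β (Sum.inr n) = 0}

/-- The set `N`. -/
def NSet (s : Fin d → ℝ) (η : ℝ) (reg : Option Lm → ℝ) (ν : ℝ) :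
    Set (MCoord Lm d) :=
  {β | β ∈ Nmin s η reg ν ∧ 0 < nh β}

/-- The purely polynomial set `P = {e_n}`. -/
def PolySet : Set (MCoord Lm d) :=
  {β | ∃ n : Nd d, β = Finsupp.single (Sum.inr n) 1}

/-- `populated = P ∪ N`. -/
def Populated (s : Fin d → ℝ) (η : ℝ) (reg : Option Lm → ℝ) (ν : ℝ) :
    Set (MCoord Lm d) :=
  PolySet ∪ NSet s η reg ν

/-- The subcritical coefficient `(z^{γ'} D^{(n')})^{sc}_β^γ`. -/
def coefZDsc (s : Fin d → ℝ) (η : ℝ) (reg : Option Lm → ℝ) (ν : ℝ)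
    (γ' : MCoord Lm d) (n' : Nd d) (β γ : MCoord Lm d) : ℝ :=
  (γ.sum fun x v =>
    match x with
    | Sum.inl (l, k) =>
        if Subcritical s η reg ν l (k + Finsupp.single n' 1) then
          (v : ℝ) * ((k n' : ℝ) + 1) *
            (if β + Finsupp.single (Sum.inl (l, k)) 1 =
                γ + Finsupp.single (Sum.inl (l, k + Finsupp.single n' 1)) 1 + γ'
             then 1 else 0)
        else 0
    | Sum.inr _ => 0) +
  ((γ (Sum.inr n') : ℝ) *
    (if β + Finsupp.single (Sum.inr n') 1 = γ + γ' then 1 else 0))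

/-- The subcritical coefficient `(∂_i)^{sc}_β^γ`. -/
def coefPartialSc (s : Fin d → ℝ) (η : ℝ) (reg : Option Lm → ℝ) (ν : ℝ)
    (i : Fin d) (β γ : MCoord Lm d) : ℝ :=
  ∑ᶠ n : Nd d,
    ((n i : ℝ) + 1) *
      coefZDsc s η reg ν (Finsupp.single (Sum.inr (n + unitNd i)) 1) n β γ

/-- `⌊β⌋ := Σ_n |n|·β(n)`. -/
def polydeg (s : Fin d → ℝ) (β : MCoord Lm d) : ℝ :=
  β.sum fun x v =>
    match x with
    | Sum.inl _ => 0
    | Sum.inr n => snorm s n * (v : ℝ)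

/-- `Σ_n (|n| − ν)·β(n)`. -/
def polyexcess (s : Fin d → ℝ) (ν : ℝ) (β : MCoord Lm d) : ℝ :=
  β.sum fun x v =>
    match x with
    | Sum.inl _ => 0
    | Sum.inr n => (snorm s n - ν) * (v : ℝ)

/-- `|β|_≺ := λ₁·ℓ(β) + λ₂·⟦β⟧ + λ₃·⌊β⌋`. -/
def ordPrec (s : Fin d → ℝ) (lam1 lam2 lam3 : ℝ) (β : MCoord Lm d) : ℝ :=
  lam1 * (mlen β : ℝ) + lam2 * (nh β : ℝ) + lam3 * polydeg s β

section Aux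

variable {Lm : Type} {d : ℕ}

lemma brkt_add (a b : MCoord Lm d) : brkt (a + b) = brkt a + brkt b := by
  unfold brkt
  refine Finsupp.sum_add_index' ?_ ?_
  · rintro (⟨l, k⟩ | n) <;> simp
  · rintro (⟨l, k⟩ | n) v w <;> push_cast <;> ring

lemma brkt_single_inl (l : Option Lm) (k : MNd d) :
    brkt (Finsupp.single (Sum.inl (l, k)) 1 : MCoord Lm d) = 1 - (mlen k : ℤ) := by
  unfold brkt
  rw [Finsupp.sum_single_index] <;> simp

lemma brkt_single_inr (n : Nd d) :
    brkt (Finsupp.single (Sum.inr n) 1 : MCoord Lm d) = 1 := by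
  unfold brkt
  rw [Finsupp.sum_single_index] <;> simp

lemma mlen_add_single (k : MNd d) (n : Nd d) :
    mlen (k + Finsupp.single n 1) = mlen k + 1 := by
  unfold mlen
  rw [Finsupp.sum_add_index' (fun _ => rfl) (fun _ _ _ => rfl),
    Finsupp.sum_single_index rfl]

lemma nh_add (a b : MCoord Lm d) : nh (a + b) = nh a + nh b := by
  unfold nh
  refine Finsupp.sum_add_index' ?_ ?_
  · rintro (⟨(l | l), k⟩ | n) <;> simp
  · rintro (⟨(l | l), k⟩ | n) v w <;> simp

lemma nh_single_inl_congr (l : Option Lm) (k k' : MNd d) :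
    nh (Finsupp.single (Sum.inl (l, k)) 1 : MCoord Lm d) =
      nh (Finsupp.single (Sum.inl (l, k')) 1 : MCoord Lm d) := by
  unfold nh
  rw [Finsupp.sum_single_index, Finsupp.sum_single_index] <;> cases l <;> simp

lemma nh_single_inr (n : Nd d) :
    nh (Finsupp.single (Sum.inr n) 1 : MCoord Lm d) = 0 := by
  unfold nh
  rw [Finsupp.sum_single_index] <;> simp

lemma snorm_nonneg {s : Fin d → ℝ} (hs : ∀ i, 1 ≤ s i) (n : Nd d) :
    0 ≤ snorm s n := by
  refine Finset.sum_nonneg fun j _ => ?_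
  have := hs j
  positivity

lemma snorm_add_unit (s : Fin d → ℝ) (n : Nd d) (i : Fin d) :
    snorm s (n + unitNd i) = snorm s n + s i := by
  unfold snorm unitNd
  have key : ∀ j : Fin d, s j * (((n + (Pi.single i 1 : Nd d)) j : ℕ) : ℝ)
      = s j * (n j : ℝ) + (if i = j then s j else 0) := by
    intro j
    by_cases hj : i = j
    · subst hj; simp [mul_add]
    · simp [Pi.single_apply, Ne.symm hj, hj]
  simp only [key, Finset.sum_add_distrib, Finset.sum_ite_eq, Finset.mem_univ, if_true]

lemma unit_add_ne (n : Nd d) (i : Fin d) : n + unitNd i ≠ n := by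
  intro hk
  have := congrFun hk i
  simp [unitNd, Pi.single_apply] at this

/-- Extraction of structure from a nonzero subcritical coefficient of `∂_i`. -/
lemma extract (s : Fin d → ℝ) (η : ℝ) (reg : Option Lm → ℝ) (ν : ℝ)
    (i : Fin d) (β γ : MCoord Lm d)
    (h : coefPartialSc s η reg ν i β γ ≠ 0) :
    (∃ (n : Nd d) (l : Option Lm) (k : MNd d),
       Subcritical s η reg ν l (k + Finsupp.single n 1) ∧
       β + Finsupp.single (Sum.inl (l, k)) 1 =
         γ + Finsupp.single (Sum.inl (l, k + Finsupp.single n 1)) 1 +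
           Finsupp.single (Sum.inr (n + unitNd i)) 1) ∨
    (∃ n : Nd d, β + Finsupp.single (Sum.inr n) 1 =
         γ + Finsupp.single (Sum.inr (n + unitNd i)) 1) := by
  unfold coefPartialSc at h
  obtain ⟨n, hn⟩ : ∃ n : Nd d, ((n i : ℝ) + 1) *
      coefZDsc s η reg ν (Finsupp.single (Sum.inr (n + unitNd i)) 1) n β γ ≠ 0 := by
    by_contra hc
    push_neg at hc
    exact h (finsum_eq_zero_of_forall_eq_zero hc)
  have hz : coefZDsc s η reg ν (Finsupp.single (Sum.inr (n + unitNd i)) 1) n β γ ≠ 0 := by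
    intro h0
    rw [h0, mul_zero] at hn
    exact hn rfl
  unfold coefZDsc at hz
  set A := (γ.sum fun x v =>
    match x with
    | Sum.inl (l, k) =>
        if Subcritical s η reg ν l (k + Finsupp.single n 1) then
          (v : ℝ) * ((k n : ℝ) + 1) *
            (if β + Finsupp.single (Sum.inl (l, k)) 1 =
                γ + Finsupp.single (Sum.inl (l, k + Finsupp.single n 1)) 1 +
                  Finsupp.single (Sum.inr (n + unitNd i)) 1
             then 1 else 0)
        else 0
    | Sum.inr _ => (0 : ℝ)) with hA
  have hAB : A ≠ 0 ∨ ((γ (Sum.inr n) : ℝ) *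
      (if β + Finsupp.single (Sum.inr n) 1 =
          γ + Finsupp.single (Sum.inr (n + unitNd i)) 1 then 1 else 0)) ≠ 0 := by
    by_contra hc
    push_neg at hc
    rw [hc.1, hc.2, add_zero] at hz
    exact hz rfl
  rcases hAB with hA' | hB
  · left
    rw [hA, Finsupp.sum] at hA'
    obtain ⟨x, -, hx⟩ := Finset.exists_ne_zero_of_sum_ne_zero hA'
    rcases x with ⟨l, k⟩ | m
    · refine ⟨n, l, k, ?_⟩
      simp only at hx
      split_ifs at hx with h1 h2
      · exact ⟨h1, h2⟩
      · simp at hx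
      · simp at hx
    · simp at hx
  · right
    refine ⟨n, ?_⟩
    by_contra hc
    rw [if_neg hc, mul_zero] at hB
    exact hB rfl

end Aux

theorem stmt12 {Lm : Type} [Fintype Lm] {d : ℕ} (hd : 1 ≤ d)
    (s : Fin d → ℝ) (hs : ∀ i, 1 ≤ s i) (η : ℝ) (reg : Option Lm → ℝ) (ν : ℝ)
    (hν : ν ≤ 1) (i : Fin d) (β γ : MCoord Lm d)
    (h : coefPartialSc s η reg ν i β γ ≠ 0) :
    (γ ∈ Nmin s η reg ν → β ∈ Nmin s η reg ν) ∧
    (γ ∈ PolySet → β ∈ PolySet) ∧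
    (γ ∈ NSet s η reg ν → β ∈ NSet s η reg ν) := by
  obtain ⟨n, l, k, hsc, heq⟩ | ⟨n, heq⟩ := extract s η reg ν i β γ h
  · -- Case A: a noise-type coordinate was differentiated
    have hne : k + Finsupp.single n 1 ≠ k := by
      intro hk
      have := DFunLike.congr_fun hk n
      simp at this
    have hbrkt : brkt β = brkt γ := by
      have h1 := congrArg brkt heq
      rw [brkt_add, brkt_add, brkt_add, brkt_single_inl, brkt_single_inl,
        brkt_single_inr, mlen_add_single] at h1
      push_cast at h1
      linarith
    have hnh : nh β = nh γ := by
      have h1 := congrArg nh heq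
      rw [nh_add, nh_add, nh_add, nh_single_inr,
        nh_single_inl_congr l k (k + Finsupp.single n 1)] at h1
      omega
    have hsub : SubcriticalM s η reg ν γ → SubcriticalM s η reg ν β := by
      intro hγ l' k' hb
      by_cases hcase : l = l' ∧ k + Finsupp.single n 1 = k'
      · obtain ⟨rfl, rfl⟩ := hcase
        exact hsc
      · apply hγ
        have hp := DFunLike.congr_fun heq (Sum.inl (l', k'))
        simp only [Finsupp.add_apply, Finsupp.single_apply, Sum.inl.injEq,
          Prod.mk.injEq, reduceCtorEq, if_false] at hp
        split_ifs at hp with h1 h2 h2 <;> first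
          | omega
          | exact absurd h2 hcase
    have hpoly : (∀ m, snorm s m < ν → γ (Sum.inr m) = 0) →
        ∀ m, snorm s m < ν → β (Sum.inr m) = 0 := by
      intro hγ m hm
      have hmm : ¬ (n + unitNd i = m) := by
        intro hme
        have h1 := snorm_add_unit s n i
        have h2 := snorm_nonneg hs n
        have h3 := hs i
        rw [hme] at h1
        linarith
      have hp := DFunLike.congr_fun heq (Sum.inr m)
      simp only [Finsupp.add_apply, Finsupp.single_apply, Sum.inr.injEq,
        reduceCtorEq, if_false, hγ m hm, hmm] at hp
      omega
    have hNmin : γ ∈ Nmin s η reg ν → β ∈ Nmin s η reg ν := by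
      rintro ⟨h1, h2, h3⟩
      exact ⟨by rw [hbrkt]; exact h1, hsub h2, hpoly h3⟩
    refine ⟨hNmin, ?_, ?_⟩
    · rintro ⟨m, rfl⟩
      exfalso
      have hp := DFunLike.congr_fun heq (Sum.inl (l, k))
      simp only [Finsupp.add_apply, Finsupp.single_apply, Sum.inl.injEq,
        Prod.mk.injEq, reduceCtorEq, if_false, hne, eq_self_iff_true, and_true,
        true_and, and_false, if_true, and_self] at hp
    · rintro ⟨h1, h2⟩
      exact ⟨hNmin h1, by rw [hnh]; exact h2⟩
  · -- Case B: a polynomial coordinate was differentiated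
    have hnu : n + unitNd i ≠ n := unit_add_ne n i
    have hbrkt : brkt β = brkt γ := by
      have h1 := congrArg brkt heq
      rw [brkt_add, brkt_add, brkt_single_inr, brkt_single_inr] at h1
      omega
    have hnh : nh β = nh γ := by
      have h1 := congrArg nh heq
      rw [nh_add, nh_add, nh_single_inr, nh_single_inr] at h1
      omega
    have hinl : ∀ x : Option Lm × MNd d, β (Sum.inl x) = γ (Sum.inl x) := by
      intro x
      have hp := DFunLike.congr_fun heq (Sum.inl x)
      simpa [Finsupp.single_apply] using hp
    have hsub : SubcriticalM s η reg ν γ → SubcriticalM s η reg ν β := by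
      intro hγ l' k' hb
      exact hγ l' k' (by rw [← hinl (l', k')]; exact hb)
    have hpoly : (∀ m, snorm s m < ν → γ (Sum.inr m) = 0) →
        ∀ m, snorm s m < ν → β (Sum.inr m) = 0 := by
      intro hγ m hm
      have hmm : ¬ (n + unitNd i = m) := by
        intro hme
        have h1 := snorm_add_unit s n i
        have h2 := snorm_nonneg hs n
        have h3 := hs i
        rw [hme] at h1
        linarith
      have hp := DFunLike.congr_fun heq (Sum.inr m)
      simp only [Finsupp.add_apply, Finsupp.single_apply, Sum.inr.injEq,
        reduceCtorEq, if_false, hγ m hm, hmm] at hp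
      split_ifs at hp <;> omega
    have hNmin : γ ∈ Nmin s η reg ν → β ∈ Nmin s η reg ν := by
      rintro ⟨h1, h2, h3⟩
      exact ⟨by rw [hbrkt]; exact h1, hsub h2, hpoly h3⟩
    refine ⟨hNmin, ?_, ?_⟩
    · rintro ⟨m, rfl⟩
      have hp0 := DFunLike.congr_fun heq (Sum.inr n)
      simp only [Finsupp.add_apply, Finsupp.single_apply, Sum.inr.injEq,
        reduceCtorEq, if_false, hnu, eq_self_iff_true, if_true] at hp0
      have hmn : m = n := by
        by_cases hc : m = n
        · exact hc
        · rw [if_neg hc] at hp0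
          omega
      subst hmn
      refine ⟨m + unitNd i, ?_⟩
      ext x
      have hp := DFunLike.congr_fun heq x
      simp only [Finsupp.add_apply, Finsupp.single_apply] at hp ⊢
      split_ifs at hp ⊢ with h1 h2 <;> first
        | omega
        | (exfalso; exact hnu (Sum.inr.inj (h2.trans h1.symm)))
    · rintro ⟨h1, h2⟩
      exact ⟨hNmin h1, by rw [hnh]; exact h2⟩


end
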